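/- For the Hamiltonian H = (1/2)(p2^2 - p1^2) + (k/2)(q2^2 - q1^2) - (m^2/4)(q2^2 - q1^2)^2 on R^4 with canonical Poisson bracket, the function I = q1 p2 + q2 p1 satisfies {H, I} = 0. -/

import Mathlib

/-- Canonical Poisson bracket on ℝ⁴ with coordinates (q1, q2, p1, p2) = (x 0, x 1, x 2, x 3). -/
noncomputable def poissonBracket (F G : (Fin 4 → ℝ) → ℝ) (x : Fin 4 → ℝ) : ℝ :=
    fderiv ℝ F x (Pi.single 0 1) * fderiv ℝ G x (Pi.single 2 1)
  + fderiv ℝ F x (Pi.single 1 1) * fderiv ℝ G x (Pi.single 3 1)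
  - fderiv ℝ F x (Pi.single 2 1) * fderiv ℝ G x (Pi.single 0 1)
  - fderiv ℝ F x (Pi.single 3 1) * fderiv ℝ G x (Pi.single 1 1)

theorem stmt1 (k m : ℝ) :
    let H : (Fin 4 → ℝ) → ℝ := fun x =>
      (1/2) * (x 3 ^ 2 - x 2 ^ 2) + (k/2) * (x 1 ^ 2 - x 0 ^ 2)
        - (m^2/4) * (x 1 ^ 2 - x 0 ^ 2) ^ 2
    let I : (Fin 4 → ℝ) → ℝ := fun x => x 0 * x 3 + x 1 * x 2
    ∀ x, poissonBracket H I x = 0 := by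
  intro H I x
  have e : ∀ i : Fin 4, HasFDerivAt (fun x : Fin 4 → ℝ => x i)
      (ContinuousLinearMap.proj (R := ℝ) (φ := fun _ => ℝ) i) x := fun i => hasFDerivAt_apply i x
  have sq : ∀ i : Fin 4, HasFDerivAt (fun x : Fin 4 → ℝ => x i ^ 2)
      ((2 * x i) • ContinuousLinearMap.proj (R := ℝ) (φ := fun _ => ℝ) i) x := fun i => by
    simpa [Function.comp_def] using (hasDerivAt_pow 2 (x i)).comp_hasFDerivAt x (e i)
  have sqF : ∀ {F : (Fin 4 → ℝ) → ℝ} {F' : (Fin 4 → ℝ) →L[ℝ] ℝ}, HasFDerivAt F F' x →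
      HasFDerivAt (fun y => F y ^ 2) ((2 * F x) • F') x := fun hF => by
    simpa [Function.comp_def] using (hasDerivAt_pow 2 _).comp_hasFDerivAt x hF
  have hH : HasFDerivAt H _ x :=
    ((((sq 3).sub (sq 2)).const_mul (1/2)).add
      (((sq 1).sub (sq 0)).const_mul (k/2))).sub
      ((sqF ((sq 1).sub (sq 0))).const_mul (m^2/4))
  have hI : HasFDerivAt I _ x := (((e 0).mul (e 3)).add ((e 1).mul (e 2)))
  simp only [poissonBracket, hH.fderiv, hI.fderiv]
  simp [ContinuousLinearMap.proj_apply, Pi.single_apply]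
  ring
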